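/- Let Ω ⊆ ℝ^d be a nonempty connected open set of ℝ^d and let G be a group of C² diffeomorphisms of Ω (under composition) all fixing a common point x₀ ∈ Ω. Then the map J : G → GL_d(ℝ) sending g to its derivative at x₀ is a group homomorphism, and every finite-order element of ker J is the identity. -/

import Mathlib

open Set

/-- Let `G` be a group acting by `C²` diffeomorphisms of a nonempty
connected open set `Ω ⊆ ℝ^d`, all fixing a common point `x₀ ∈ Ω`. Then the map
`J : g ↦ dg_{x₀}` is a group homomorphism into `GL_d(ℝ)` (it is multiplicative, sends
`1` to the identity, and takes invertible values), and every finite-order element of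
its kernel acts as the identity on `Ω`. -/
theorem stmt5 {d : ℕ} {Ω : Set (EuclideanSpace ℝ (Fin d))}
    (hΩo : IsOpen Ω) (hΩc : IsConnected Ω) {G : Type*} [Group G]
    (ρ : G → EuclideanSpace ℝ (Fin d) → EuclideanSpace ℝ (Fin d))
    (hρ1 : ∀ x ∈ Ω, ρ 1 x = x)
    (hρmul : ∀ g h : G, ∀ x ∈ Ω, ρ (g * h) x = ρ g (ρ h x))
    (hbij : ∀ g : G, BijOn (ρ g) Ω Ω)
    (hC2 : ∀ g : G, ContDiffOn ℝ 2 (ρ g) Ω)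
    {x₀ : EuclideanSpace ℝ (Fin d)} (hx₀ : x₀ ∈ Ω) (hfix : ∀ g : G, ρ g x₀ = x₀) :
    (fderiv ℝ (ρ (1 : G)) x₀ = ContinuousLinearMap.id ℝ (EuclideanSpace ℝ (Fin d))) ∧
    (∀ g h : G,
      fderiv ℝ (ρ (g * h)) x₀ = (fderiv ℝ (ρ g) x₀).comp (fderiv ℝ (ρ h) x₀)) ∧
    (∀ g : G, IsUnit (fderiv ℝ (ρ g) x₀)) ∧
    (∀ g : G,
      fderiv ℝ (ρ g) x₀ = ContinuousLinearMap.id ℝ (EuclideanSpace ℝ (Fin d)) →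
      IsOfFinOrder g → EqOn (ρ g) id Ω) := by
  -- Basic differentiability facts
  have hdiff : ∀ (g : G) (p : EuclideanSpace ℝ (Fin d)), p ∈ Ω → ContDiffAt ℝ 2 (ρ g) p :=
    fun g p hp => (hC2 g).contDiffAt (hΩo.mem_nhds hp)
  have hdAt : ∀ (g : G) (p : EuclideanSpace ℝ (Fin d)), p ∈ Ω → DifferentiableAt ℝ (ρ g) p :=
    fun g p hp => (hdiff g p hp).differentiableAt (by norm_num)
  -- fderiv of ρ 1 is the identity at any point of Ω
  have hone : ∀ p ∈ Ω, fderiv ℝ (ρ (1 : G)) p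
      = ContinuousLinearMap.id ℝ (EuclideanSpace ℝ (Fin d)) := by
    intro p hp
    have h1 : ρ (1 : G) =ᶠ[nhds p] id :=
      Filter.eventuallyEq_of_mem (hΩo.mem_nhds hp) (fun x hx => hρ1 x hx)
    rw [h1.fderiv_eq, fderiv_id]
  -- chain rule at a common fixed point
  have hcomp : ∀ (a b : G) (p : EuclideanSpace ℝ (Fin d)), p ∈ Ω → ρ b p = p →
      fderiv ℝ (ρ (a * b)) p = (fderiv ℝ (ρ a) p).comp (fderiv ℝ (ρ b) p) := by
    intro a b p hp hbp
    have h1 : ρ (a * b) =ᶠ[nhds p] (ρ a ∘ ρ b) :=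
      Filter.eventuallyEq_of_mem (hΩo.mem_nhds hp) (fun x hx => hρmul a b x hx)
    have ha : DifferentiableAt ℝ (ρ a) (ρ b p) := by rw [hbp]; exact hdAt a p hp
    rw [h1.fderiv_eq, fderiv_comp p ha (hdAt b p hp), hbp]
  -- fixed points of powers
  have hfixpow : ∀ (g : G) (p : EuclideanSpace ℝ (Fin d)), p ∈ Ω → ρ g p = p →
      ∀ k : ℕ, ρ (g ^ k) p = p := by
    intro g p hp hgp k
    induction k with
    | zero => simpa using hρ1 p hp
    | succ k ih => rw [pow_succ, hρmul (g ^ k) g p hp, hgp, ih]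
  -- derivatives of powers at a fixed point with identity derivative
  have hpowderiv : ∀ (g : G) (p : EuclideanSpace ℝ (Fin d)), p ∈ Ω → ρ g p = p →
      fderiv ℝ (ρ g) p = ContinuousLinearMap.id ℝ (EuclideanSpace ℝ (Fin d)) →
      ∀ k : ℕ, fderiv ℝ (ρ (g ^ k)) p
        = ContinuousLinearMap.id ℝ (EuclideanSpace ℝ (Fin d)) := by
    intro g p hp hgp hdg k
    induction k with
    | zero => simpa using hone p hp
    | succ k ih =>
      rw [pow_succ, hcomp (g ^ k) g p hp hgp, ih, hdg]
      ext x; rfl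
  -- Local Bochner linearization
  have hlocal : ∀ g : G, ∀ p ∈ Ω, ρ g p = p →
      fderiv ℝ (ρ g) p = ContinuousLinearMap.id ℝ (EuclideanSpace ℝ (Fin d)) →
      IsOfFinOrder g → ∀ᶠ y in nhds p, ρ g y = y := by
    intro g p hp hgp hdg hfin
    set n := orderOf g with hn_def
    have hn : 0 < n := hfin.orderOf_pos
    have hgn : g ^ n = 1 := pow_orderOf_eq_one g
    set φ : EuclideanSpace ℝ (Fin d) → EuclideanSpace ℝ (Fin d) :=
      fun x => (n : ℝ)⁻¹ • ∑ k ∈ Finset.range n, ρ (g ^ k) x with hφ_def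
    -- strict derivative of each ρ (g^k) at p is id
    have hstrict_each : ∀ k : ℕ, HasStrictFDerivAt (ρ (g ^ k))
        (ContinuousLinearMap.id ℝ (EuclideanSpace ℝ (Fin d))) p := by
      intro k
      have h := (hdiff (g ^ k) p hp).hasStrictFDerivAt (by norm_num)
      rwa [hpowderiv g p hp hgp hdg k] at h
    have hsum : HasStrictFDerivAt (fun x => ∑ k ∈ Finset.range n, ρ (g ^ k) x)
        (∑ _k ∈ Finset.range n, ContinuousLinearMap.id ℝ (EuclideanSpace ℝ (Fin d))) p :=
      HasStrictFDerivAt.fun_sum (fun k _ => hstrict_each k)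
    have hφstrict : HasStrictFDerivAt φ
        ((n : ℝ)⁻¹ • ∑ _k ∈ Finset.range n,
          ContinuousLinearMap.id ℝ (EuclideanSpace ℝ (Fin d))) p :=
      hsum.fun_const_smul _
    have hsum_id : ((n : ℝ)⁻¹ • ∑ _k ∈ Finset.range n,
        ContinuousLinearMap.id ℝ (EuclideanSpace ℝ (Fin d)))
        = ContinuousLinearMap.id ℝ (EuclideanSpace ℝ (Fin d)) := by
      ext x
      simp [Finset.sum_const, smul_smul, ← mul_assoc,
        inv_mul_cancel₀ (by exact_mod_cast hn.ne' : (n:ℝ) ≠ 0)]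
    rw [hsum_id] at hφstrict
    have hφstrict' : HasStrictFDerivAt φ
        ((ContinuousLinearEquiv.refl ℝ (EuclideanSpace ℝ (Fin d)) :
          EuclideanSpace ℝ (Fin d) ≃L[ℝ] EuclideanSpace ℝ (Fin d)) :
          EuclideanSpace ℝ (Fin d) →L[ℝ] EuclideanSpace ℝ (Fin d)) p := by
      convert hφstrict using 1
      exact ContinuousLinearEquiv.coe_refl
    set F := hφstrict'.toOpenPartialHomeomorph φ with hF_def
    have hpF : p ∈ F.source := hφstrict'.mem_toOpenPartialHomeomorph_source
    have hFopen : IsOpen F.source := F.open_source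
    have hFcoe : ⇑F = φ := hφstrict'.toOpenPartialHomeomorph_coe
    -- φ ∘ ρ g = φ on Ω
    have hφg : ∀ x ∈ Ω, φ (ρ g x) = φ x := by
      intro x hx
      have hshift : ∀ k : ℕ, ρ (g ^ k) (ρ g x) = ρ (g ^ (k + 1)) x := by
        intro k
        rw [pow_succ, hρmul (g ^ k) g x hx]
      have hsum_eq : ∑ k ∈ Finset.range n, ρ (g ^ k) (ρ g x)
          = ∑ k ∈ Finset.range n, ρ (g ^ k) x := by
        have h0 : ρ (g ^ n) x = ρ (g ^ 0) x := by rw [hgn, pow_zero]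
        have h1 := Finset.sum_range_succ' (fun k => ρ (g ^ k) x) n
        have h2 := Finset.sum_range_succ (fun k => ρ (g ^ k) x) n
        have h3 : ∑ k ∈ Finset.range n, ρ (g ^ (k + 1)) x + ρ (g ^ 0) x
            = ∑ k ∈ Finset.range n, ρ (g ^ k) x + ρ (g ^ n) x := by
          rw [← h1, ← h2]
        rw [h0] at h3
        have h4 := add_right_cancel h3
        calc ∑ k ∈ Finset.range n, ρ (g ^ k) (ρ g x)
            = ∑ k ∈ Finset.range n, ρ (g ^ (k + 1)) x := by
              exact Finset.sum_congr rfl (fun k _ => hshift k)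
          _ = ∑ k ∈ Finset.range n, ρ (g ^ k) x := h4
      simp only [hφ_def, hsum_eq]
    -- conclude locally
    have hcont : ContinuousAt (ρ g) p := (hdiff g p hp).continuousAt
    have hmem1 : ∀ᶠ y in nhds p, y ∈ F.source := hFopen.eventually_mem hpF
    have hmem2 : ∀ᶠ y in nhds p, ρ g y ∈ F.source := by
      have : F.source ∈ nhds (ρ g p) := hFopen.mem_nhds (by rw [hgp]; exact hpF)
      exact hcont.eventually_mem this
    have hmem3 : ∀ᶠ y in nhds p, y ∈ Ω := hΩo.eventually_mem hp
    filter_upwards [hmem1, hmem2, hmem3] with y h1 h2 h3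
    have : φ (ρ g y) = φ y := hφg y h3
    have hinj : InjOn F F.source := F.injOn
    rw [hFcoe] at hinj
    exact hinj h2 h1 this
  refine ⟨hone x₀ hx₀, fun g h => hcomp g h x₀ hx₀ (hfix h), ?_, ?_⟩
  · -- invertibility
    intro g
    rw [isUnit_iff_exists]
    refine ⟨fderiv ℝ (ρ g⁻¹) x₀, ?_, ?_⟩
    · have := hcomp g g⁻¹ x₀ hx₀ (hfix g⁻¹)
      rw [mul_inv_cancel, hone x₀ hx₀] at this
      exact this.symm
    · have := hcomp g⁻¹ g x₀ hx₀ (hfix g)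
      rw [inv_mul_cancel, hone x₀ hx₀] at this
      exact this.symm
  · -- finite order kernel elements act trivially
    intro g hdg hfin
    set S : Set (EuclideanSpace ℝ (Fin d)) :=
      Ω ∩ {x | ∀ᶠ y in nhds x, ρ g y = y} with hS_def
    have hSsub : S ⊆ Ω := inter_subset_left
    have hSfix : ∀ x ∈ S, ρ g x = x := fun x hx => hx.2.self_of_nhds
    have hSderiv : ∀ x ∈ S, fderiv ℝ (ρ g) x
        = ContinuousLinearMap.id ℝ (EuclideanSpace ℝ (Fin d)) := by
      intro x hx
      have h1 : ρ g =ᶠ[nhds x] id := hx.2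
      rw [h1.fderiv_eq, fderiv_id]
    have hcontf : ContinuousOn (fderiv ℝ (ρ g)) Ω :=
      (hC2 g).continuousOn_fderiv_of_isOpen hΩo (by norm_num)
    -- closure points of S inside Ω are in S
    have hclosure : Ω ∩ closure S ⊆ S := by
      intro x ⟨hxΩ, hxc⟩
      have hne : (nhdsWithin x S).NeBot := mem_closure_iff_nhdsWithin_neBot.mp hxc
      -- ρ g x = x
      have hfx : ρ g x = x := by
        have t1 : Filter.Tendsto (ρ g) (nhdsWithin x S) (nhds (ρ g x)) :=
          ((hdiff g x hxΩ).continuousAt.continuousWithinAt)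
        have t2 : Filter.Tendsto (ρ g) (nhdsWithin x S) (nhds x) := by
          have : Filter.Tendsto id (nhdsWithin x S) (nhds x) :=
            Filter.tendsto_id.mono_left nhdsWithin_le_nhds
          refine this.congr' ?_
          filter_upwards [self_mem_nhdsWithin] with y hy
          exact (hSfix y hy).symm
        exact tendsto_nhds_unique t1 t2
      -- fderiv (ρ g) x = id
      have hdx : fderiv ℝ (ρ g) x
          = ContinuousLinearMap.id ℝ (EuclideanSpace ℝ (Fin d)) := by
        have t1 : Filter.Tendsto (fderiv ℝ (ρ g)) (nhdsWithin x S)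
            (nhds (fderiv ℝ (ρ g) x)) :=
          ((hcontf x hxΩ).mono hSsub)
        have t2 : Filter.Tendsto (fderiv ℝ (ρ g)) (nhdsWithin x S)
            (nhds (ContinuousLinearMap.id ℝ (EuclideanSpace ℝ (Fin d)))) := by
          refine Filter.Tendsto.congr' ?_ tendsto_const_nhds
          filter_upwards [self_mem_nhdsWithin] with y hy
          exact (hSderiv y hy).symm
        exact tendsto_nhds_unique t1 t2
      exact ⟨hxΩ, hlocal g x hxΩ hfx hdx hfin⟩
    -- x₀ ∈ S
    have hx₀S : x₀ ∈ S := ⟨hx₀, hlocal g x₀ hx₀ (hfix g) hdg hfin⟩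
    -- connectedness argument
    have hSeq : Ω ⊆ S := by
      by_contra hcon
      have hv : (Ω ∩ (closure S)ᶜ).Nonempty := by
        rw [not_subset] at hcon
        obtain ⟨x, hxΩ, hxS⟩ := hcon
        refine ⟨x, hxΩ, fun hxc => hxS (hclosure ⟨hxΩ, hxc⟩)⟩
      have hu : (Ω ∩ {x | ∀ᶠ y in nhds x, ρ g y = y}).Nonempty := ⟨x₀, hx₀, hx₀S.2⟩
      have huo : IsOpen {x | ∀ᶠ y in nhds x, ρ g y = y} := isOpen_setOf_eventually_nhds
      have hvo : IsOpen (closure S)ᶜ := isClosed_closure.isOpen_compl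
      have hcover : Ω ⊆ {x | ∀ᶠ y in nhds x, ρ g y = y} ∪ (closure S)ᶜ := by
        intro x hxΩ
        by_cases hxc : x ∈ closure S
        · exact Or.inl (hclosure ⟨hxΩ, hxc⟩).2
        · exact Or.inr hxc
      obtain ⟨x, hxΩ, hxu, hxv⟩ :=
        hΩc.isPreconnected _ _ huo hvo hcover hu hv
      exact hxv (subset_closure ⟨hxΩ, hxu⟩)
    intro x hx
    exact hSfix x (hSeq hx)
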